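/- Let p = (p₁,…,p_{n₁}) and q = (q₁,…,q_{n₂}) be probability vectors of positive reals, each summing to 1 and arranged in non-increasing order, let L ≥ 1, and take the second-field codeword lengths to be those of σ̂₂, namely m₁ = 0 and mⱼ = ⌊log₂(j−1)⌋ + 1 for 2 ≤ j ≤ n₂. Then for every 1 ≤ k ≤ n₁ and every integer N ≥ 0, F(k,N) = max( max over ℓ₀ ∈ {1,…,L} of ( F(k−1, N − 2^{L−ℓ₀}) + p_k · Σ_{i=1}^{min(n₂, 2^{L−ℓ₀})} qᵢ ), F(k−1, N) ), where F(k−1, N − 2^{L−ℓ₀}) = −∞ whenever N − 2^{L−ℓ₀} < 0. -/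

import Mathlib

/-- The weight `2^{L-l}` (in units of `2^{-L}`) of an extended codeword length
`l ∈ ℕ ∪ {∞}`, with the convention `2^{L-∞} = 0`. -/
def lenWeight (L : ℕ) (l : ℕ∞) : ℤ :=
  if l = ⊤ then 0 else 2 ^ (L - l.toNat)

/-- `F p q n₂ L m k N` : the maximum, over length functions
`ℓ : {1,…,k} → {1,…,L} ∪ {∞}` whose total weight `Σ_{i=1}^k 2^{L-ℓ(i)}` is at most `N`,
of the success probability `Σ_{i=1}^k Σ_{j=1}^{n₂} pᵢ qⱼ 𝟙[ℓ(i) + mⱼ ≤ L]`, where `m`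
gives the second-field codeword lengths.  By the `sSup` over `EReal` conventions,
`F(0,N) = 0` for `N ≥ 0` and `F(k,N) = -∞` (i.e. `⊥`) for `N < 0`. -/
noncomputable def F (p q : ℕ → ℝ) (n₂ L : ℕ) (m : ℕ → ℕ∞) (k : ℕ) (N : ℤ) : EReal :=
  sSup {x : EReal | ∃ ℓ : ℕ → ℕ∞,
    (∀ i ∈ Finset.Icc 1 k, 1 ≤ ℓ i ∧ (ℓ i ≤ (L : ℕ∞) ∨ ℓ i = ⊤)) ∧
    (∑ i ∈ Finset.Icc 1 k, lenWeight L (ℓ i)) ≤ N ∧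
    x = ((∑ i ∈ Finset.Icc 1 k, ∑ j ∈ Finset.Icc 1 n₂,
      if ℓ i + m j ≤ (L : ℕ∞) then p i * q j else 0 : ℝ) : EReal)}

/-- The codeword lengths of the code `σ̂₂` : `m₁ = 0`, and `mⱼ = ⌊log₂ (j-1)⌋ + 1`
for `j ≥ 2`. -/
def sigmaHatLen (j : ℕ) : ℕ∞ :=
  if j ≤ 1 then 0 else ((Nat.log 2 (j - 1) + 1 : ℕ) : ℕ∞)

lemma lenWeight_nonneg (L : ℕ) (l : ℕ∞) : 0 ≤ lenWeight L l := by
  unfold lenWeight; split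
  · exact le_refl 0
  · positivity

noncomputable def erealAddIso (c : ℝ) : EReal ≃o EReal where
  toFun x := x + (c : EReal)
  invFun x := x + ((-c : ℝ) : EReal)
  left_inv x := by
    induction x using EReal.rec with
    | bot => simp
    | coe x =>    show (↑x + ↑c) + ↑(-c) = (↑x : EReal)
                  rw [← EReal.coe_add, ← EReal.coe_add]; norm_num
    | top => simp [EReal.top_add_coe]
  right_inv x := by
    induction x using EReal.rec with
    | bot => simp
    | coe x =>    show (↑x + ↑(-c)) + ↑c = (↑x : EReal)
                  rw [← EReal.coe_add, ← EReal.coe_add]; norm_num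
    | top => simp [EReal.top_add_coe]
  map_rel_iff' := @fun a b => (EReal.addLECancellable_coe c).add_le_add_iff_right

lemma sSup_image_add (S : Set EReal) (c : ℝ) :
    sSup ((fun x => x + (c : EReal)) '' S) = sSup S + (c : EReal) := by
  rw [sSup_image]
  exact ((erealAddIso c).map_sSup S).symm

lemma cond_iff {L l₀ j : ℕ} (hl : 1 ≤ l₀) (hlL : l₀ ≤ L) (hj : 1 ≤ j) :
    ((l₀ : ℕ∞) + sigmaHatLen j ≤ (L : ℕ∞)) ↔ j ≤ 2 ^ (L - l₀) := by
  unfold sigmaHatLen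
  by_cases h : j ≤ 1
  · simp only [h, if_pos]
    rw [add_zero]
    have h1 : (l₀ : ℕ∞) ≤ (L : ℕ∞) := by exact_mod_cast hlL
    have h2 : 1 ≤ 2 ^ (L - l₀) := Nat.one_le_two_pow
    simp [h1]
    omega
  · simp only [h, if_neg, not_false_iff]
    push_neg at h
    rw [← Nat.cast_add, Nat.cast_le]
    have hne : j - 1 ≠ 0 := by omega
    have := Nat.log_lt_iff_lt_pow (b := 2) (by norm_num) hne (x := L - l₀)
    omega

lemma row_sum (q : ℕ → ℝ) (n₂ L l₀ : ℕ) (c : ℝ) (hl : 1 ≤ l₀) (hlL : l₀ ≤ L) :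
    (∑ j ∈ Finset.Icc 1 n₂, if (l₀ : ℕ∞) + sigmaHatLen j ≤ (L : ℕ∞) then c * q j else 0)
      = c * ∑ j ∈ Finset.Icc 1 (min n₂ (2 ^ (L - l₀))), q j := by
  classical
  have hset : Finset.Icc 1 (min n₂ (2 ^ (L - l₀)))
      = (Finset.Icc 1 n₂).filter (fun j => (l₀ : ℕ∞) + sigmaHatLen j ≤ (L : ℕ∞)) := by
    ext j
    simp only [Finset.mem_filter, Finset.mem_Icc, le_min_iff]
    constructor
    · rintro ⟨h1, h2, h3⟩
      exact ⟨⟨h1, h2⟩, (cond_iff hl hlL h1).2 h3⟩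
    · rintro ⟨⟨h1, h2⟩, h3⟩
      exact ⟨h1, h2, (cond_iff hl hlL h1).1 h3⟩
  rw [hset, Finset.mul_sum, Finset.sum_filter]

def Fset (p q : ℕ → ℝ) (n₂ L : ℕ) (k : ℕ) (N : ℤ) : Set EReal :=
  {x : EReal | ∃ ℓ : ℕ → ℕ∞,
    (∀ i ∈ Finset.Icc 1 k, 1 ≤ ℓ i ∧ (ℓ i ≤ (L : ℕ∞) ∨ ℓ i = ⊤)) ∧
    (∑ i ∈ Finset.Icc 1 k, lenWeight L (ℓ i)) ≤ N ∧
    x = ((∑ i ∈ Finset.Icc 1 k, ∑ j ∈ Finset.Icc 1 n₂,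
      if ℓ i + sigmaHatLen j ≤ (L : ℕ∞) then p i * q j else 0 : ℝ) : EReal)}

lemma F_eq (p q : ℕ → ℝ) (n₂ L k : ℕ) (N : ℤ) :
    F p q n₂ L sigmaHatLen k N = sSup (Fset p q n₂ L k N) := rfl

lemma set_decomp (p q : ℕ → ℝ) (n₂ L k' : ℕ) (N : ℤ) :
    Fset p q n₂ L (k' + 1) N =
      Fset p q n₂ L k' N ∪
      ⋃ l₀ ∈ Finset.Icc 1 L,
        (fun x => x + ((p (k'+1) * ∑ i ∈ Finset.Icc 1 (min n₂ (2 ^ (L - l₀))), q i : ℝ) : EReal)) ''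
          Fset p q n₂ L k' (N - 2 ^ (L - l₀)) := by
  classical
  ext x
  simp only [Fset, Set.mem_union, Set.mem_iUnion, Set.mem_image, Set.mem_setOf_eq]
  constructor
  · rintro ⟨ℓ, hcon, hw, hx⟩
    have hmemk : k' + 1 ∈ Finset.Icc 1 (k' + 1) := by simp
    have hsub : ∀ i ∈ Finset.Icc 1 k', i ∈ Finset.Icc 1 (k'+1) := by
      intro i hi; simp only [Finset.mem_Icc] at hi ⊢; omega
    rw [Finset.sum_Icc_succ_top (by omega : 1 ≤ k' + 1)] at hw hx
    by_cases htop : ℓ (k' + 1) = ⊤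
    · left
      refine ⟨ℓ, fun i hi => hcon i (hsub i hi), ?_, ?_⟩
      · simpa [lenWeight, htop] using hw
      · rw [hx]
        norm_cast
        have hz : (∑ j ∈ Finset.Icc 1 n₂,
            if ℓ (k'+1) + sigmaHatLen j ≤ (L : ℕ∞) then p (k'+1) * q j else 0) = 0 := by
          apply Finset.sum_eq_zero
          intro j hj
          rw [if_neg]
          rw [htop, top_add]
          simp
        rw [hz, add_zero]
    · right
      obtain ⟨h1, h2⟩ := hcon (k'+1) hmemk
      have h2' : ℓ (k'+1) ≤ (L : ℕ∞) := h2.resolve_right htop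
      have hcast : ℓ (k'+1) = ((ℓ (k'+1)).toNat : ℕ∞) := (ENat.coe_toNat htop).symm
      set l₀ := (ℓ (k'+1)).toNat with hl₀def
      have hl1 : 1 ≤ l₀ := by
        rw [hcast] at h1; exact_mod_cast h1
      have hlL : l₀ ≤ L := by
        rw [hcast] at h2'; exact_mod_cast h2'
      refine ⟨l₀, Finset.mem_Icc.mpr ⟨hl1, hlL⟩, ((∑ i ∈ Finset.Icc 1 k', ∑ j ∈ Finset.Icc 1 n₂,
          if ℓ i + sigmaHatLen j ≤ (L : ℕ∞) then p i * q j else 0 : ℝ) : EReal), ?_, ?_⟩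
      · refine ⟨ℓ, fun i hi => hcon i (hsub i hi), ?_, rfl⟩
        have hlw : lenWeight L (ℓ (k'+1)) = 2 ^ (L - l₀) := by
          simp [lenWeight, htop, hl₀def]
        rw [hlw] at hw
        linarith
      · rw [hx]
        have : (∑ j ∈ Finset.Icc 1 n₂,
            if ℓ (k'+1) + sigmaHatLen j ≤ (L : ℕ∞) then p (k'+1) * q j else 0)
            = p (k'+1) * ∑ i ∈ Finset.Icc 1 (min n₂ (2 ^ (L - l₀))), q i := by
          rw [hcast]
          exact row_sum q n₂ L l₀ (p (k'+1)) hl1 hlL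
        rw [this, EReal.coe_add]
  · have hsub : ∀ i ∈ Finset.Icc 1 k', i ≠ k' + 1 := by
      intro i hi; simp only [Finset.mem_Icc] at hi; omega
    rintro (⟨ℓ, hcon, hw, hx⟩ | ⟨l₀, hmem, x', ⟨ℓ, hcon, hw, hx'⟩, hx⟩)
    · refine ⟨Function.update ℓ (k'+1) ⊤, ?_, ?_, ?_⟩
      · intro i hi
        rcases eq_or_ne i (k'+1) with rfl | hne
        · simp [Function.update_self]
        · rw [Function.update_of_ne hne]
          apply hcon
          simp only [Finset.mem_Icc] at hi ⊢; omega
      · rw [Finset.sum_Icc_succ_top (by omega : 1 ≤ k' + 1)]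
        rw [Finset.sum_congr rfl (fun i hi => by
          rw [Function.update_of_ne (hsub i hi)])]
        simpa [lenWeight] using hw
      · rw [Finset.sum_Icc_succ_top (by omega : 1 ≤ k' + 1)]
        rw [Finset.sum_congr rfl (fun i hi => by
          rw [Function.update_of_ne (hsub i hi)])]
        have hz : (∑ j ∈ Finset.Icc 1 n₂,
            if Function.update ℓ (k'+1) ⊤ (k'+1) + sigmaHatLen j ≤ (L : ℕ∞)
            then p (k'+1) * q j else 0) = 0 := by
          apply Finset.sum_eq_zero
          intro j hj
          rw [if_neg]
          rw [Function.update_self, top_add]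
          exact fun hc => ENat.coe_ne_top L (top_le_iff.mp hc)
        rw [hz, add_zero, hx]
    · obtain ⟨hl1, hlL⟩ := Finset.mem_Icc.mp hmem
      refine ⟨Function.update ℓ (k'+1) (l₀ : ℕ∞), ?_, ?_, ?_⟩
      · intro i hi
        rcases eq_or_ne i (k'+1) with rfl | hne
        · rw [Function.update_self]
          constructor
          · exact_mod_cast hl1
          · left; exact_mod_cast hlL
        · rw [Function.update_of_ne hne]
          apply hcon
          simp only [Finset.mem_Icc] at hi ⊢; omega
      · rw [Finset.sum_Icc_succ_top (by omega : 1 ≤ k' + 1)]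
        rw [Finset.sum_congr rfl (fun i hi => by
          rw [Function.update_of_ne (hsub i hi)])]
        have hlw : lenWeight L ((l₀ : ℕ∞)) = 2 ^ (L - l₀) := by
          unfold lenWeight
          rw [if_neg (ENat.coe_ne_top l₀)]
          simp
        rw [Function.update_self, hlw]
        linarith
      · rw [Finset.sum_Icc_succ_top (by omega : 1 ≤ k' + 1)]
        rw [Finset.sum_congr rfl (fun i hi => by
          rw [Function.update_of_ne (hsub i hi)])]
        have hrow : (∑ j ∈ Finset.Icc 1 n₂,
            if Function.update ℓ (k'+1) (l₀ : ℕ∞) (k'+1) + sigmaHatLen j ≤ (L : ℕ∞)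
            then p (k'+1) * q j else 0)
            = p (k'+1) * ∑ i ∈ Finset.Icc 1 (min n₂ (2 ^ (L - l₀))), q i := by
          rw [Function.update_self]
          exact row_sum q n₂ L l₀ (p (k'+1)) hl1 hlL
        rw [hrow, ← hx, hx', EReal.coe_add]

/-- (Lemma 2: the simplified recursion for `F` when the second-field
lengths are those of `σ̂₂`.)  For every `1 ≤ k ≤ n₁` and every integer `N ≥ 0`,
`F(k,N) = max( max_{ℓ₀ ∈ [1,L]} ( F(k-1, N - 2^{L-ℓ₀}) + p_k · Σ_{i=1}^{min(n₂,2^{L-ℓ₀})} qᵢ ),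
F(k-1,N) )`, where terms with `N - 2^{L-ℓ₀} < 0` have `F = -∞ = ⊥`. -/
theorem stmt9 (n₁ n₂ L : ℕ) (hL : 1 ≤ L) (p q : ℕ → ℝ)
    (hp : ∀ i ∈ Finset.Icc 1 n₁, 0 < p i) (hq : ∀ j ∈ Finset.Icc 1 n₂, 0 < q j)
    (hps : ∑ i ∈ Finset.Icc 1 n₁, p i = 1) (hqs : ∑ j ∈ Finset.Icc 1 n₂, q j = 1)
    (hpm : ∀ i j : ℕ, 1 ≤ i → i ≤ j → j ≤ n₁ → p j ≤ p i)
    (hqm : ∀ i j : ℕ, 1 ≤ i → i ≤ j → j ≤ n₂ → q j ≤ q i)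
    (k : ℕ) (hk1 : 1 ≤ k) (hk2 : k ≤ n₁) (N : ℤ) (hN : 0 ≤ N) :
    F p q n₂ L sigmaHatLen k N =
      max
        (⨆ l₀ ∈ Finset.Icc 1 L,
          (F p q n₂ L sigmaHatLen (k - 1) (N - 2 ^ (L - l₀)) +
            ((p k * ∑ i ∈ Finset.Icc 1 (min n₂ (2 ^ (L - l₀))), q i : ℝ) : EReal)))
        (F p q n₂ L sigmaHatLen (k - 1) N) := by

  obtain ⟨k', rfl⟩ : ∃ k', k = k' + 1 := ⟨k - 1, by omega⟩
  simp only [Nat.add_sub_cancel]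
  rw [F_eq, set_decomp, sSup_union, sup_comm]
  congr 1
  · rw [sSup_iUnion]
    refine iSup_congr fun l₀ => ?_
    rw [sSup_iUnion]
    refine iSup_congr fun hl₀ => ?_
    rw [sSup_image_add, F_eq]
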